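/- Let m ≥ 1 and let T⁽¹⁾ and T⁽²⁾ be distinct non-self-overlapping m-bit templates. For d with 1 ≤ d ≤ m−1 define e_d = 1 if T⁽¹⁾(i) = T⁽²⁾(i+d) for all i < m−d and e_d = 0 otherwise, and define e_{−d} = 1 if T⁽¹⁾(i+d) = T⁽²⁾(i) for all i < m−d and e_{−d} = 0 otherwise. Let c⁽¹⁾_M and c⁽²⁾_M be the occurrence counts of T⁽¹⁾ and T⁽²⁾ in a block B drawn uniformly at random from the 2^M equiprobable M-bit blocks. Then, as M → ∞, the correlation coefficient Cov(c⁽¹⁾_M, c⁽²⁾_M)/√(Var(c⁽¹⁾_M)·Var(c⁽²⁾_M)) converges to (−2m + 1 + Σ_{d=1}^{m−1} 2^{m−d}(e_d + e_{−d})) / (2^m − 2m + 1). -/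

import Mathlib

open scoped Classical

/-- `T` occurs in the block `B` at position `k`: `B (k+i) = T i` for all `i < m`. -/
def occursAt {m M : ℕ} (T : Fin m → Bool) (B : Fin M → Bool) (k : ℕ) : Prop :=
  ∀ i : Fin m, ∀ h : k + i.1 < M, B ⟨k + i.1, h⟩ = T i

/-- The number of occurrences of the template `T` in the block `B`. -/
noncomputable def occCount {m M : ℕ} (T : Fin m → Bool) (B : Fin M → Bool) : ℕ :=
  ((Finset.range (M + 1 - m)).filter (fun k => occursAt T B k)).card

/-- `T` is non-self-overlapping. -/
def NonSelfOverlapping {m : ℕ} (T : Fin m → Bool) : Prop :=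
  ∀ k : ℕ, 1 ≤ k → k ≤ m - 1 → ∃ i : ℕ, ∃ h : i < m - k,
    T ⟨i, by omega⟩ ≠ T ⟨i + k, by omega⟩

/-- Expectation of `f` when the block is drawn uniformly from the `2^M` `M`-bit blocks. -/
noncomputable def unifExp (M : ℕ) (f : (Fin M → Bool) → ℝ) : ℝ :=
  (∑ B : Fin M → Bool, f B) / 2 ^ M

/-- Variance of `f` under the uniform distribution on `M`-bit blocks. -/
noncomputable def unifVar (M : ℕ) (f : (Fin M → Bool) → ℝ) : ℝ :=
  unifExp M (fun B => f B ^ 2) - (unifExp M f) ^ 2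

/-- Covariance of `f` and `g` under the uniform distribution on `M`-bit blocks. -/
noncomputable def unifCov (M : ℕ) (f g : (Fin M → Bool) → ℝ) : ℝ :=
  unifExp M (fun B => f B * g B) - unifExp M f * unifExp M g

/-- `e_d` for `d ≥ 1`: equals `1` if `T¹(i) = T²(i+d)` for all `i < m - d`, else `0`. -/
noncomputable def ePlus {m : ℕ} (T1 T2 : Fin m → Bool) (d : ℕ) : ℝ :=
  if ∀ i : ℕ, ∀ h : i < m - d, T1 ⟨i, by omega⟩ = T2 ⟨i + d, by omega⟩ then 1 else 0

/-- `e_{-d}` for `d ≥ 1`: equals `1` if `T¹(i+d) = T²(i)` for all `i < m - d`, else `0`. -/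
noncomputable def eMinus {m : ℕ} (T1 T2 : Fin m → Bool) (d : ℕ) : ℝ :=
  if ∀ i : ℕ, ∀ h : i < m - d, T1 ⟨i + d, by omega⟩ = T2 ⟨i, by omega⟩ then 1 else 0

lemma card_fixed (M : ℕ) (A : Finset (Fin M)) (g : Fin M → Bool) :
    (Finset.univ.filter (fun B : Fin M → Bool => ∀ x ∈ A, B x = g x)).card
      = 2 ^ (M - A.card) := by
  have e : {B : Fin M → Bool // ∀ x ∈ A, B x = g x} ≃ ({x : Fin M // x ∉ A} → Bool) :=
    { toFun := fun B x => B.1 x.1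
      invFun := fun h => ⟨fun x => if hx : x ∈ A then g x else h ⟨x, hx⟩, by
        intro x hx; simp [hx]⟩
      left_inv := by
        rintro ⟨B, hB⟩
        ext x
        by_cases hx : x ∈ A
        · simp [hx, hB x hx]
        · simp [hx]
      right_inv := by
        intro h; ext x; simp [x.2] }
  have h1 := Fintype.card_congr e
  rw [Fintype.card_subtype] at h1
  rw [h1, Fintype.card_fun]
  congr 1
  have : Fintype.card {x : Fin M // x ∉ A} = M - A.card := by
    rw [Fintype.card_subtype_compl]
    simp
  simp [this]

lemma joint_count {m M : ℕ} (T1 T2 : Fin m → Bool) (k l : ℕ) (hm : 1 ≤ m)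
    (hk : k + m ≤ M) (hl : l + m ≤ M) (hkl : k ≤ l) :
    (((Finset.univ.filter
        (fun B : Fin M → Bool => occursAt T1 B k ∧ occursAt T2 B l)).card : ℝ))
      = if m ≤ l - k then 2 ^ (M - 2 * m)
        else eMinus T1 T2 (l - k) * 2 ^ (M - (m + (l - k))) := by
  set d := l - k with hd
  by_cases hdm : m ≤ d
  · -- disjoint windows
    rw [if_pos hdm]
    set S : Finset ℕ := Finset.Ico k (k + m) ∪ Finset.Ico l (l + m) with hS
    have hSlt : ∀ x ∈ S, x < M := by
      intro x hx
      simp only [hS, Finset.mem_union, Finset.mem_Ico] at hx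
      omega
    set g : Fin M → Bool := fun x =>
      if h : k ≤ x.1 ∧ x.1 < k + m then T1 ⟨x.1 - k, by omega⟩
      else if h2 : l ≤ x.1 ∧ x.1 < l + m then T2 ⟨x.1 - l, by omega⟩
      else false with hg
    have hev : ∀ B : Fin M → Bool,
        (occursAt T1 B k ∧ occursAt T2 B l) ↔ ∀ x ∈ S.attachFin hSlt, B x = g x := by
      intro B
      constructor
      · rintro ⟨o1, o2⟩ x hx
        rw [Finset.mem_attachFin] at hx
        simp only [hS, Finset.mem_union, Finset.mem_Ico] at hx
        rcases hx with hx | hx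
        · have h1 := o1 ⟨x.1 - k, by omega⟩ (by omega)
          have hxe : (⟨k + (x.1 - k), by omega⟩ : Fin M) = x := by
            apply Fin.ext; simp; omega
          rw [hxe] at h1
          rw [h1, hg]
          simp only [hx, and_self, dif_pos]
        · have h1 := o2 ⟨x.1 - l, by omega⟩ (by omega)
          have hxe : (⟨l + (x.1 - l), by omega⟩ : Fin M) = x := by
            apply Fin.ext; simp; omega
          rw [hxe] at h1
          rw [h1, hg]
          have hnot : ¬ (k ≤ x.1 ∧ x.1 < k + m) := by omega
          simp only [hnot, dif_neg, not_false_iff]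
          simp only [hx, and_self, dif_pos]
      · intro h
        constructor
        · intro i hi
          have hmem : (⟨k + i.1, hi⟩ : Fin M) ∈ S.attachFin hSlt := by
            rw [Finset.mem_attachFin]
            simp only [hS, Finset.mem_union, Finset.mem_Ico]
            left; exact ⟨by omega, by omega⟩
          have := h _ hmem
          rw [this, hg]
          have hc : k ≤ k + i.1 ∧ k + i.1 < k + m := ⟨by omega, by omega⟩
          simp only [hc, and_self, dif_pos]
          congr 1
          apply Fin.ext; simp
        · intro i hi
          have hmem : (⟨l + i.1, hi⟩ : Fin M) ∈ S.attachFin hSlt := by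
            rw [Finset.mem_attachFin]
            simp only [hS, Finset.mem_union, Finset.mem_Ico]
            right; exact ⟨by omega, by omega⟩
          have := h _ hmem
          rw [this, hg]
          have hn : ¬ (k ≤ l + i.1 ∧ l + i.1 < k + m) := by omega
          have hc : l ≤ l + i.1 ∧ l + i.1 < l + m := ⟨by omega, by omega⟩
          simp only [hn, dif_neg, not_false_iff, hc, and_self, dif_pos]
          congr 1
          apply Fin.ext; simp
    have : (Finset.univ.filter
        (fun B : Fin M → Bool => occursAt T1 B k ∧ occursAt T2 B l))
        = (Finset.univ.filter (fun B : Fin M → Bool => ∀ x ∈ S.attachFin hSlt, B x = g x)) := by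
      apply Finset.filter_congr
      intro B _
      simp only [hev B]
    rw [this, card_fixed]
    have hcard : (S.attachFin hSlt).card = 2 * m := by
      rw [Finset.card_attachFin, hS, Finset.card_union_of_disjoint]
      · simp; omega
      · rw [Finset.disjoint_left]
        intro a ha hb
        simp only [Finset.mem_Ico] at ha hb
        omega
    rw [hcard]
    norm_num
  · -- overlapping windows
    rw [if_neg hdm]
    by_cases hcomp : ∀ i : ℕ, ∀ h : i < m - d, T1 ⟨i + d, by omega⟩ = T2 ⟨i, by omega⟩
    · -- compatible
      rw [eMinus, if_pos hcomp, one_mul]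
      set S : Finset ℕ := Finset.Ico k (l + m) with hS
      have hSlt : ∀ x ∈ S, x < M := by
        intro x hx; simp only [hS, Finset.mem_Ico] at hx; omega
      set g : Fin M → Bool := fun x =>
        if h : k ≤ x.1 ∧ x.1 < k + m then T1 ⟨x.1 - k, by omega⟩
        else if h2 : l ≤ x.1 ∧ x.1 < l + m then T2 ⟨x.1 - l, by omega⟩
        else false with hg
      have hev : ∀ B : Fin M → Bool,
          (occursAt T1 B k ∧ occursAt T2 B l) ↔ ∀ x ∈ S.attachFin hSlt, B x = g x := by
        intro B
        constructor
        · rintro ⟨o1, o2⟩ x hx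
          rw [Finset.mem_attachFin] at hx
          simp only [hS, Finset.mem_Ico] at hx
          by_cases hx1 : x.1 < k + m
          · have h1 := o1 ⟨x.1 - k, by omega⟩ (by omega)
            have hxe : (⟨k + (x.1 - k), by omega⟩ : Fin M) = x := by
              apply Fin.ext; simp; omega
            rw [hxe] at h1
            rw [h1, hg]
            have hc : k ≤ x.1 ∧ x.1 < k + m := ⟨by omega, by omega⟩
            simp only [hc, and_self, dif_pos]
          · have h1 := o2 ⟨x.1 - l, by omega⟩ (by omega)
            have hxe : (⟨l + (x.1 - l), by omega⟩ : Fin M) = x := by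
              apply Fin.ext; simp; omega
            rw [hxe] at h1
            rw [h1, hg]
            have hn : ¬ (k ≤ x.1 ∧ x.1 < k + m) := by omega
            have hc : l ≤ x.1 ∧ x.1 < l + m := ⟨by omega, by omega⟩
            simp only [hn, dif_neg, not_false_iff, hc, and_self, dif_pos]
        · intro h
          constructor
          · intro i hi
            have hmem : (⟨k + i.1, hi⟩ : Fin M) ∈ S.attachFin hSlt := by
              rw [Finset.mem_attachFin]
              simp only [hS, Finset.mem_Ico]
              exact ⟨by omega, by omega⟩
            have := h _ hmem
            rw [this, hg]
            have hc : k ≤ k + i.1 ∧ k + i.1 < k + m := ⟨by omega, by omega⟩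
            simp only [hc, and_self, dif_pos]
            congr 1
            apply Fin.ext; simp
          · intro i hi
            have hmem : (⟨l + i.1, hi⟩ : Fin M) ∈ S.attachFin hSlt := by
              rw [Finset.mem_attachFin]
              simp only [hS, Finset.mem_Ico]
              exact ⟨by omega, by omega⟩
            have hB := h _ hmem
            by_cases hx1 : l + i.1 < k + m
            · have hc : k ≤ l + i.1 ∧ l + i.1 < k + m := ⟨by omega, by omega⟩
              rw [hB, hg]
              simp only [hc, and_self, dif_pos]
              have hcomp' := hcomp i.1 (by omega)
              have he1 : (⟨l + i.1 - k, by omega⟩ : Fin m) = ⟨i.1 + d, by omega⟩ := by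
                apply Fin.ext; simp; omega
              rw [he1, hcomp']
            · have hn : ¬ (k ≤ l + i.1 ∧ l + i.1 < k + m) := by omega
              have hc : l ≤ l + i.1 ∧ l + i.1 < l + m := ⟨by omega, by omega⟩
              rw [hB, hg]
              simp only [hn, dif_neg, not_false_iff, hc, and_self, dif_pos]
              congr 1
              apply Fin.ext; simp
      have : (Finset.univ.filter
          (fun B : Fin M → Bool => occursAt T1 B k ∧ occursAt T2 B l))
          = (Finset.univ.filter (fun B : Fin M → Bool => ∀ x ∈ S.attachFin hSlt, B x = g x)) := by
        apply Finset.filter_congr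
        intro B _
        simp only [hev B]
      rw [this, card_fixed]
      have hcard : (S.attachFin hSlt).card = m + d := by
        rw [Finset.card_attachFin, hS, Nat.card_Ico]
        omega
      rw [hcard]
      norm_num
    · -- incompatible: empty
      rw [eMinus, if_neg hcomp, zero_mul]
      push_neg at hcomp
      obtain ⟨i, hi, hne⟩ := hcomp
      have : (Finset.univ.filter
          (fun B : Fin M → Bool => occursAt T1 B k ∧ occursAt T2 B l)) = ∅ := by
        rw [Finset.filter_eq_empty_iff]
        rintro B - ⟨o1, o2⟩
        have h1 := o1 ⟨i + d, by omega⟩ (by omega)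
        have h2 := o2 ⟨i, by omega⟩ (by omega)
        have he : (⟨k + (i + d), by omega⟩ : Fin M) = ⟨l + i, by omega⟩ := by
          apply Fin.ext; simp; omega
        rw [he] at h1
        rw [h1] at h2
        exact hne h2
      rw [this]
      simp

lemma tri (f : ℕ → ℝ) (N : ℕ) :
    ∑ k ∈ Finset.range N, ∑ l ∈ Finset.range N, (if k ≤ l then f (l - k) else 0)
      = ∑ d ∈ Finset.range N, ((N - d : ℕ) : ℝ) * f d := by
  rw [← Finset.sum_product']
  rw [← Finset.sum_filter]
  have hRHS : ∑ d ∈ Finset.range N, ((N - d : ℕ) : ℝ) * f d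
      = ∑ q ∈ (Finset.range N).sigma (fun d => Finset.range (N - d)), f q.1 := by
    rw [Finset.sum_sigma]
    congr 1
    ext d
    simp [mul_comm]
  rw [hRHS]
  apply Finset.sum_nbij' (i := fun p => ⟨p.2 - p.1, p.1⟩)
    (j := fun q => (q.2, q.2 + q.1))
  · intro p hp
    simp only [Finset.mem_filter, Finset.mem_product, Finset.mem_range] at hp
    simp only [Finset.mem_sigma, Finset.mem_range]
    omega
  · intro q hq
    simp only [Finset.mem_sigma, Finset.mem_range] at hq
    simp only [Finset.mem_filter, Finset.mem_product, Finset.mem_range]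
    omega
  · rintro ⟨a, b⟩ hp
    simp only [Finset.mem_filter, Finset.mem_product, Finset.mem_range] at hp
    simp only [Prod.mk.injEq]
    exact ⟨trivial, by omega⟩
  · rintro ⟨a, b⟩ hq
    simp only [Finset.mem_sigma, Finset.mem_range] at hq
    have hab : b + a - b = a := by omega
    simp [hab]
  · intro p hp
    simp only [Finset.mem_filter, Finset.mem_product, Finset.mem_range] at hp
    rfl

lemma tri_strict (g : ℕ → ℝ) (N : ℕ) :
    ∑ k ∈ Finset.range N, ∑ l ∈ Finset.range N, (if l < k then g (k - l) else 0)
      = ∑ d ∈ Finset.range N, ((N - d : ℕ) : ℝ) * g d - N * g 0 := by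
  rw [Finset.sum_comm]
  have h1 : ∀ l k : ℕ, (if l < k then g (k - l) else 0)
      = (if l ≤ k then g (k - l) else 0) - (if l = k then g (k - l) else 0) := by
    intro l k
    by_cases h : l < k
    · have h2 : l ≤ k := le_of_lt h
      have h3 : l ≠ k := by omega
      simp [h, h2, h3]
    · by_cases he : l = k
      · subst he; simp
      · have h2 : ¬ l ≤ k := by omega
        simp [h, h2, he]
  have h2 : ∑ l ∈ Finset.range N, ∑ k ∈ Finset.range N, (if l < k then g (k - l) else 0)
      = ∑ l ∈ Finset.range N, ∑ k ∈ Finset.range N, (if l ≤ k then g (k - l) else 0)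
        - ∑ l ∈ Finset.range N, ∑ k ∈ Finset.range N, (if l = k then g (k - l) else 0) := by
    rw [← Finset.sum_sub_distrib]
    congr 1; ext l
    rw [← Finset.sum_sub_distrib]
    congr 1; ext k
    exact h1 l k
  rw [h2, tri]
  congr 1
  have h3 : ∀ l ∈ Finset.range N,
      ∑ k ∈ Finset.range N, (if l = k then g (k - l) else 0) = g 0 := by
    intro l hl
    rw [Finset.sum_ite_eq (Finset.range N) l (fun k => g (k - l))]
    simp [hl]
  rw [Finset.sum_congr rfl h3, Finset.sum_const, Finset.card_range, nsmul_eq_mul]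

lemma double_sum (f g : ℕ → ℝ) (N : ℕ) :
    ∑ k ∈ Finset.range N, ∑ l ∈ Finset.range N,
        (if k ≤ l then f (l - k) else g (k - l))
      = ∑ d ∈ Finset.range N, ((N - d : ℕ) : ℝ) * f d
        + (∑ d ∈ Finset.range N, ((N - d : ℕ) : ℝ) * g d - N * g 0) := by
  rw [← tri, ← tri_strict, ← Finset.sum_add_distrib]
  congr 1; ext k
  rw [← Finset.sum_add_distrib]
  congr 1; ext l
  rcases le_or_gt k l with h | h
  · simp [h, Nat.not_lt_of_le h]
  · simp [h, Nat.not_le_of_lt h]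

lemma eMinus_self_zero {m : ℕ} (T : Fin m → Bool) : eMinus T T 0 = 1 := by
  rw [eMinus, if_pos]
  intro i h
  congr 1

lemma pow_div_pow (a b : ℕ) (h : b ≤ a) :
    ((2:ℝ) ^ (a - b)) / 2 ^ a = (2:ℝ) ^ (-(b:ℤ)) := by
  have h1 : (2:ℝ) ^ a = 2 ^ (a - b) * 2 ^ b := by
    rw [← pow_add]; congr 1; omega
  have h2 : (0:ℝ) < 2 ^ (a - b) := by positivity
  have h3 : (0:ℝ) < 2 ^ b := by positivity
  rw [h1, zpow_neg, zpow_natCast]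
  field_simp

lemma occCount_cast {m M : ℕ} (T : Fin m → Bool) (B : Fin M → Bool) :
    (occCount T B : ℝ)
      = ∑ k ∈ Finset.range (M + 1 - m), (if occursAt T B k then (1:ℝ) else 0) := by
  rw [occCount, Finset.card_filter]
  push_cast
  rfl

lemma single_count {m M : ℕ} (T : Fin m → Bool) (k : ℕ) (hm : 1 ≤ m) (hk : k + m ≤ M) :
    ((Finset.univ.filter (fun B : Fin M → Bool => occursAt T B k)).card : ℝ)
      = 2 ^ (M - m) := by
  have h1 : (Finset.univ.filter (fun B : Fin M → Bool => occursAt T B k))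
      = (Finset.univ.filter (fun B : Fin M → Bool => occursAt T B k ∧ occursAt T B k)) := by
    simp
  rw [h1, joint_count T T k k hm hk hk le_rfl]
  simp only [Nat.sub_self]
  rw [if_neg (by omega), eMinus_self_zero, one_mul]
  norm_num

lemma exp_formula {m M : ℕ} (T : Fin m → Bool) (hm : 1 ≤ m) (hM : m ≤ M) :
    unifExp M (fun B => (occCount T B : ℝ))
      = ((M + 1 - m : ℕ) : ℝ) * (2:ℝ) ^ (-(m:ℤ)) := by
  rw [unifExp]
  have h1 : ∑ B : Fin M → Bool, (occCount T B : ℝ)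
      = ∑ k ∈ Finset.range (M + 1 - m),
          ((Finset.univ.filter (fun B : Fin M → Bool => occursAt T B k)).card : ℝ) := by
    simp_rw [occCount_cast]
    rw [Finset.sum_comm]
    congr 1; ext k
    rw [Finset.sum_boole]
  rw [h1]
  have h2 : ∀ k ∈ Finset.range (M + 1 - m),
      ((Finset.univ.filter (fun B : Fin M → Bool => occursAt T B k)).card : ℝ)
        = 2 ^ (M - m) := by
    intro k hk
    rw [Finset.mem_range] at hk
    exact single_count T k hm (by omega)
  rw [Finset.sum_congr rfl h2, Finset.sum_const, Finset.card_range, nsmul_eq_mul]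
  rw [mul_div_assoc, pow_div_pow M m hM]

lemma cov_formula {m M : ℕ} (hm : 1 ≤ m) (T1 T2 : Fin m → Bool) (hM : 2 * m ≤ M) :
    unifCov M (fun B => (occCount T1 B : ℝ)) (fun B => (occCount T2 B : ℝ))
      = ((M + 1 - m : ℕ) : ℝ) * (eMinus T1 T2 0 * (2:ℝ) ^ (-(m:ℤ)) - (2:ℝ) ^ (-(2*(m:ℤ))))
        + ∑ d ∈ Finset.Icc 1 (m - 1), (((M + 1 - m : ℕ) : ℝ) - (d:ℝ)) *
            ((eMinus T1 T2 d + eMinus T2 T1 d) * (2:ℝ) ^ (-((m:ℤ) + ((d:ℕ):ℤ)))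
              - 2 * (2:ℝ) ^ (-(2*(m:ℤ)))) := by
  set N := M + 1 - m with hN
  have hmN : m ≤ N := by omega
  set c : ℝ := (2:ℝ) ^ (-(2*(m:ℤ))) with hc
  set A : ℕ → ℝ := fun d =>
    if m ≤ d then c else eMinus T1 T2 d * (2:ℝ) ^ (-((m:ℤ) + d)) with hA
  set A' : ℕ → ℝ := fun d =>
    if m ≤ d then c else eMinus T2 T1 d * (2:ℝ) ^ (-((m:ℤ) + d)) with hA'
  -- card / 2^M = F k l
  have hcard : ∀ k ∈ Finset.range N, ∀ l ∈ Finset.range N,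
      ((Finset.univ.filter
        (fun B : Fin M → Bool => occursAt T1 B k ∧ occursAt T2 B l)).card : ℝ) / 2 ^ M
      = if k ≤ l then A (l - k) else A' (k - l) := by
    have haux : ∀ (S1 S2 : Fin m → Bool) (k l : ℕ), k < N → l < N → k ≤ l →
        ((Finset.univ.filter
          (fun B : Fin M → Bool => occursAt S1 B k ∧ occursAt S2 B l)).card : ℝ) / 2 ^ M
        = if m ≤ l - k then c else eMinus S1 S2 (l - k) * (2:ℝ) ^ (-((m:ℤ) + ((l-k:ℕ):ℤ))) := by
      intro S1 S2 k l hk hl hkl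
      rw [joint_count S1 S2 k l hm (by omega) (by omega) hkl]
      by_cases hd : m ≤ l - k
      · rw [if_pos hd, if_pos hd, hc, pow_div_pow M (2 * m) hM]
        norm_cast
      · rw [if_neg hd, if_neg hd, mul_div_assoc]
        congr 1
        have h1 : m + (l - k) ≤ M := by omega
        have := pow_div_pow M (m + (l - k)) h1
        rw [this]
        norm_cast
    intro k hk l hl
    rw [Finset.mem_range] at hk hl
    by_cases hkl : k ≤ l
    · rw [if_pos hkl, haux T1 T2 k l hk hl hkl]
    · rw [if_neg hkl]
      have h1 : (Finset.univ.filter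
          (fun B : Fin M → Bool => occursAt T1 B k ∧ occursAt T2 B l))
          = (Finset.univ.filter
          (fun B : Fin M → Bool => occursAt T2 B l ∧ occursAt T1 B k)) := by
        apply Finset.filter_congr; intro B _; exact and_comm
      rw [h1, haux T2 T1 l k hl hk (by omega)]
  -- product expectation
  have hprod : unifExp M (fun B => (occCount T1 B : ℝ) * (occCount T2 B : ℝ))
      = ∑ k ∈ Finset.range N, ∑ l ∈ Finset.range N,
          (if k ≤ l then A (l - k) else A' (k - l)) := by
    rw [unifExp]
    have key : ∑ B : Fin M → Bool, (occCount T1 B : ℝ) * (occCount T2 B : ℝ)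
        = ∑ k ∈ Finset.range N, ∑ l ∈ Finset.range N,
            ((Finset.univ.filter
              (fun B : Fin M → Bool => occursAt T1 B k ∧ occursAt T2 B l)).card : ℝ) := by
      have step : ∀ B : Fin M → Bool, (occCount T1 B : ℝ) * (occCount T2 B : ℝ)
          = ∑ k ∈ Finset.range N, ∑ l ∈ Finset.range N,
              (if occursAt T1 B k ∧ occursAt T2 B l then (1:ℝ) else 0) := by
        intro B
        rw [occCount_cast, occCount_cast, Finset.sum_mul_sum]
        apply Finset.sum_congr rfl; intro k _
        apply Finset.sum_congr rfl; intro l _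
        by_cases h1 : occursAt T1 B k <;> by_cases h2 : occursAt T2 B l <;>
          simp [h1, h2]
      rw [Finset.sum_congr rfl (fun B _ => step B), Finset.sum_comm]
      apply Finset.sum_congr rfl; intro k _
      rw [Finset.sum_comm]
      apply Finset.sum_congr rfl; intro l _
      rw [Finset.sum_boole]
    rw [key, Finset.sum_div]
    apply Finset.sum_congr rfl; intro k hk
    rw [Finset.sum_div]
    apply Finset.sum_congr rfl; intro l hl
    exact hcard k hk l hl
  -- covariance as a double sum of centered terms
  have hcov : unifCov M (fun B => (occCount T1 B : ℝ)) (fun B => (occCount T2 B : ℝ))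
      = ∑ k ∈ Finset.range N, ∑ l ∈ Finset.range N,
          (if k ≤ l then A (l - k) - c else A' (k - l) - c) := by
    rw [unifCov, hprod, exp_formula T1 hm (by omega), exp_formula T2 hm (by omega)]
    have hcc : ((N:ℝ) * (2:ℝ) ^ (-(m:ℤ))) * ((N:ℝ) * (2:ℝ) ^ (-(m:ℤ)))
        = ∑ k ∈ Finset.range N, ∑ l ∈ Finset.range N, c := by
      rw [Finset.sum_const, Finset.sum_const, Finset.card_range]
      simp only [nsmul_eq_mul]
      rw [hc]
      have : (2:ℝ) ^ (-(m:ℤ)) * (2:ℝ) ^ (-(m:ℤ)) = (2:ℝ) ^ (-(2*(m:ℤ))) := by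
        rw [← zpow_add₀ (by norm_num : (2:ℝ) ≠ 0)]
        ring_nf
      rw [← this]
      ring
    rw [hcc, ← Finset.sum_sub_distrib]
    apply Finset.sum_congr rfl; intro k _
    rw [← Finset.sum_sub_distrib]
    apply Finset.sum_congr rfl; intro l _
    by_cases h : k ≤ l
    · rw [if_pos h, if_pos h]
    · rw [if_neg h, if_neg h]
  rw [hcov]
  set f : ℕ → ℝ := fun d => A d - c with hf
  set g : ℕ → ℝ := fun d => A' d - c with hg
  rw [double_sum f g N]
  have hf0 : ∀ d, m ≤ d → f d = 0 := by
    intro d hd; rw [hf]; simp only [hA]; rw [if_pos hd]; ring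
  have hg0 : ∀ d, m ≤ d → g d = 0 := by
    intro d hd; rw [hg]; simp only [hA']; rw [if_pos hd]; ring
  have htrunc : ∀ (h : ℕ → ℝ), (∀ d, m ≤ d → h d = 0) →
      ∑ d ∈ Finset.range N, ((N - d : ℕ) : ℝ) * h d
        = ∑ d ∈ Finset.range m, ((N - d : ℕ) : ℝ) * h d := by
    intro h hh
    rw [Finset.sum_subset (Finset.range_subset_range.2 hmN)]
    intro d _ hd
    rw [Finset.mem_range, not_lt] at hd
    rw [hh d hd, mul_zero]
  rw [htrunc f hf0, htrunc g hg0]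
  have hsplit : ∀ (h : ℕ → ℝ),
      ∑ d ∈ Finset.range m, ((N - d : ℕ) : ℝ) * h d
        = (N:ℝ) * h 0 + ∑ d ∈ Finset.Icc 1 (m-1), ((N:ℝ) - (d:ℝ)) * h d := by
    intro h
    have h1 : Finset.range m = insert 0 (Finset.Icc 1 (m-1)) := by
      ext d
      simp only [Finset.mem_range, Finset.mem_insert, Finset.mem_Icc]
      omega
    rw [h1, Finset.sum_insert (by simp)]
    have e0 : ((N - 0 : ℕ):ℝ) * h 0 = (N:ℝ) * h 0 := by norm_num
    rw [e0]
    congr 1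
    apply Finset.sum_congr rfl
    intro d hd
    rw [Finset.mem_Icc] at hd
    congr 1
    rw [Nat.cast_sub (by omega)]
  rw [hsplit f, hsplit g]
  have hfg0 : f 0 = eMinus T1 T2 0 * (2:ℝ) ^ (-(m:ℤ)) - c := by
    rw [hf]; simp only [hA]; rw [if_neg (by omega)]
    norm_num
  have hg00 : g 0 = eMinus T2 T1 0 * (2:ℝ) ^ (-(m:ℤ)) - c := by
    rw [hg]; simp only [hA']; rw [if_neg (by omega)]
    norm_num
  have hmerge : ∑ d ∈ Finset.Icc 1 (m-1), ((N:ℝ) - (d:ℝ)) * f d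
      + ∑ d ∈ Finset.Icc 1 (m-1), ((N:ℝ) - (d:ℝ)) * g d
      = ∑ d ∈ Finset.Icc 1 (m-1), ((N:ℝ) - (d:ℝ)) *
          ((eMinus T1 T2 d + eMinus T2 T1 d) * (2:ℝ) ^ (-((m:ℤ) + d)) - 2 * c) := by
    rw [← Finset.sum_add_distrib]
    apply Finset.sum_congr rfl
    intro d hd
    rw [Finset.mem_Icc] at hd
    have hdm : ¬ m ≤ d := by omega
    rw [hf, hg]; simp only [hA, hA']
    rw [if_neg hdm, if_neg hdm]
    ring
  have : (N:ℝ) * f 0 + ∑ d ∈ Finset.Icc 1 (m-1), ((N:ℝ) - (d:ℝ)) * f d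
      + ((N:ℝ) * g 0 + ∑ d ∈ Finset.Icc 1 (m-1), ((N:ℝ) - (d:ℝ)) * g d - (N:ℝ) * g 0)
      = (N:ℝ) * f 0 + (∑ d ∈ Finset.Icc 1 (m-1), ((N:ℝ) - (d:ℝ)) * f d
        + ∑ d ∈ Finset.Icc 1 (m-1), ((N:ℝ) - (d:ℝ)) * g d) := by ring
  rw [this, hmerge, hfg0]

lemma ePlus_eq_eMinus {m : ℕ} (T1 T2 : Fin m → Bool) (d : ℕ) :
    ePlus T1 T2 d = eMinus T2 T1 d := by
  rw [ePlus, eMinus]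
  apply if_congr _ rfl rfl
  constructor
  · intro h i hh; exact (h i hh).symm
  · intro h i hh; exact (h i hh).symm

lemma eMinus_zero_of_ne {m : ℕ} (T1 T2 : Fin m → Bool) (hT : T1 ≠ T2) :
    eMinus T1 T2 0 = 0 := by
  rw [eMinus, if_neg]
  intro hcond
  apply hT
  funext i
  have h := hcond i.1 (by omega)
  have e1 : (⟨i.1 + 0, by omega⟩ : Fin m) = i := by apply Fin.ext; simp
  have e2 : (⟨i.1, by omega⟩ : Fin m) = i := by apply Fin.ext; simp
  rwa [e1, e2] at h

lemma eMinus_self_of_nso {m : ℕ} (T : Fin m → Bool) (hNSO : NonSelfOverlapping T)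
    (d : ℕ) (hd1 : 1 ≤ d) (hd2 : d ≤ m - 1) : eMinus T T d = 0 := by
  rw [eMinus, if_neg]
  intro hcond
  obtain ⟨i, hi, hne⟩ := hNSO d hd1 hd2
  exact hne (hcond i hi).symm

lemma two_mul_le_two_pow (m : ℕ) (hm : 1 ≤ m) : 2 * m ≤ 2 ^ m := by
  induction m with
  | zero => omega
  | succ n ih =>
    rcases Nat.lt_or_ge 1 (n + 1) with h | h
    · have hn : 1 ≤ n := by omega
      have h1 := ih hn
      have h2 : 2 ≤ 2 ^ n := by
        calc 2 = 2 * 1 := by ring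
        _ ≤ 2 * n := by omega
        _ ≤ 2 ^ n := h1
      have h3 : 2 ^ (n + 1) = 2 * 2 ^ n := by ring
      omega
    · have : n = 0 := by omega
      subst this; norm_num

lemma var_eq_cov (M : ℕ) (f : (Fin M → Bool) → ℝ) : unifVar M f = unifCov M f f := by
  rw [unifVar, unifCov]
  congr 1
  · congr 1; funext B; ring
  · ring

lemma var_formula {m M : ℕ} (hm : 1 ≤ m) (T : Fin m → Bool)
    (hNSO : NonSelfOverlapping T) (hM : 2 * m ≤ M) :
    unifVar M (fun B => (occCount T B : ℝ))
      = ((M + 1 - m : ℕ) : ℝ) *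
          ((2:ℝ) ^ (-(m:ℤ)) - (2:ℝ) ^ (-(2*(m:ℤ)))
            - ((m - 1 : ℕ) : ℝ) * (2 * (2:ℝ) ^ (-(2*(m:ℤ)))))
        + (∑ d ∈ Finset.Icc 1 (m - 1), (d:ℝ)) * (2 * (2:ℝ) ^ (-(2*(m:ℤ)))) := by
  rw [var_eq_cov, cov_formula hm T T hM, eMinus_self_zero]
  set N : ℝ := ((M + 1 - m : ℕ) : ℝ) with hN
  set c : ℝ := (2:ℝ) ^ (-(2*(m:ℤ))) with hc
  have hsum : ∑ d ∈ Finset.Icc 1 (m - 1), (N - (d:ℝ)) *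
      ((eMinus T T d + eMinus T T d) * (2:ℝ) ^ (-((m:ℤ) + ((d:ℕ):ℤ))) - 2 * c)
      = ∑ d ∈ Finset.Icc 1 (m - 1), (N * (-2 * c) + (d:ℝ) * (2 * c)) := by
    apply Finset.sum_congr rfl
    intro d hd
    rw [Finset.mem_Icc] at hd
    rw [eMinus_self_of_nso T hNSO d hd.1 hd.2]
    ring
  rw [hsum, Finset.sum_add_distrib, Finset.sum_const, Nat.card_Icc]
  have hcard : (m - 1 + 1 - 1) = m - 1 := by omega
  rw [hcard, nsmul_eq_mul, ← Finset.sum_mul]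
  ring

lemma cov_closed {m M : ℕ} (hm : 1 ≤ m) (T1 T2 : Fin m → Bool) (hT : T1 ≠ T2)
    (hM : 2 * m ≤ M) :
    unifCov M (fun B => (occCount T1 B : ℝ)) (fun B => (occCount T2 B : ℝ))
      = ((M + 1 - m : ℕ) : ℝ) *
          (-(2:ℝ) ^ (-(2*(m:ℤ)))
            + ∑ d ∈ Finset.Icc 1 (m - 1),
              ((eMinus T1 T2 d + eMinus T2 T1 d) * (2:ℝ) ^ (-((m:ℤ) + ((d:ℕ):ℤ)))
                - 2 * (2:ℝ) ^ (-(2*(m:ℤ)))))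
        + (- ∑ d ∈ Finset.Icc 1 (m - 1), (d:ℝ) *
              ((eMinus T1 T2 d + eMinus T2 T1 d) * (2:ℝ) ^ (-((m:ℤ) + ((d:ℕ):ℤ)))
                - 2 * (2:ℝ) ^ (-(2*(m:ℤ))))) := by
  rw [cov_formula hm T1 T2 hM, eMinus_zero_of_ne T1 T2 hT]
  set N : ℝ := ((M + 1 - m : ℕ) : ℝ) with hN
  set c : ℝ := (2:ℝ) ^ (-(2*(m:ℤ))) with hc
  have hsum : ∑ d ∈ Finset.Icc 1 (m - 1), (N - (d:ℝ)) *
      ((eMinus T1 T2 d + eMinus T2 T1 d) * (2:ℝ) ^ (-((m:ℤ) + ((d:ℕ):ℤ))) - 2 * c)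
      = N * ∑ d ∈ Finset.Icc 1 (m - 1),
          ((eMinus T1 T2 d + eMinus T2 T1 d) * (2:ℝ) ^ (-((m:ℤ) + ((d:ℕ):ℤ))) - 2 * c)
        - ∑ d ∈ Finset.Icc 1 (m - 1), (d:ℝ) *
          ((eMinus T1 T2 d + eMinus T2 T1 d) * (2:ℝ) ^ (-((m:ℤ) + ((d:ℕ):ℤ))) - 2 * c) := by
    rw [Finset.mul_sum, ← Finset.sum_sub_distrib]
    apply Finset.sum_congr rfl
    intro d hd
    ring
  rw [hsum]
  ring

theorem correlation_coefficient_limit (m : ℕ) (hm : 1 ≤ m) (T1 T2 : Fin m → Bool)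
    (hT : T1 ≠ T2) (h1 : NonSelfOverlapping T1) (h2 : NonSelfOverlapping T2) :
    Filter.Tendsto (fun M : ℕ =>
        unifCov M (fun B => (occCount T1 B : ℝ)) (fun B => (occCount T2 B : ℝ))
          / Real.sqrt (unifVar M (fun B => (occCount T1 B : ℝ))
              * unifVar M (fun B => (occCount T2 B : ℝ))))
      Filter.atTop
      (nhds ((-2 * (m : ℝ) + 1
          + ∑ d ∈ Finset.Icc 1 (m - 1), 2 ^ (m - d) * (ePlus T1 T2 d + eMinus T1 T2 d))
        / (2 ^ m - 2 * (m : ℝ) + 1))) := by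
  set c : ℝ := (2:ℝ) ^ (-(2*(m:ℤ))) with hc
  have hc0 : 0 < c := by rw [hc]; positivity
  set t : ℕ → ℝ := fun d =>
    (eMinus T1 T2 d + eMinus T2 T1 d) * (2:ℝ) ^ (-((m:ℤ) + ((d:ℕ):ℤ))) - 2 * c with ht
  set Vc : ℝ := (2:ℝ) ^ (-(m:ℤ)) - c - ((m - 1 : ℕ) : ℝ) * (2 * c) with hVc
  set Wc : ℝ := (∑ d ∈ Finset.Icc 1 (m - 1), (d:ℝ)) * (2 * c) with hWc
  set Ac : ℝ := -c + ∑ d ∈ Finset.Icc 1 (m - 1), t d with hAc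
  set Bc : ℝ := - ∑ d ∈ Finset.Icc 1 (m - 1), (d:ℝ) * t d with hBc
  have hcast1 : ((m - 1 : ℕ) : ℝ) = (m:ℝ) - 1 := by
    rw [Nat.cast_sub hm]; norm_num
  -- identity for t d in the range
  have htd : ∀ d ∈ Finset.Icc 1 (m - 1), t d
      = c * ((2:ℝ) ^ (m - d) * (ePlus T1 T2 d + eMinus T1 T2 d) - 2) := by
    intro d hd
    rw [Finset.mem_Icc] at hd
    have hdm : d ≤ m := by omega
    have hpow : c * (2:ℝ) ^ (m - d) = (2:ℝ) ^ (-((m:ℤ) + ((d:ℕ):ℤ))) := by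
      rw [hc, ← zpow_natCast (2:ℝ) (m - d), ← zpow_add₀ (by norm_num : (2:ℝ) ≠ 0)]
      congr 1
      push_cast [Nat.cast_sub hdm]
      ring
    rw [ht]
    simp only []
    rw [← hpow, ePlus_eq_eMinus]
    ring
  -- Ac in terms of the target numerator
  have hAc2 : Ac = c * (-2 * (m : ℝ) + 1
      + ∑ d ∈ Finset.Icc 1 (m - 1), 2 ^ (m - d) * (ePlus T1 T2 d + eMinus T1 T2 d)) := by
    rw [hAc, Finset.sum_congr rfl htd]
    have step : ∑ d ∈ Finset.Icc 1 (m - 1),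
        c * ((2:ℝ) ^ (m - d) * (ePlus T1 T2 d + eMinus T1 T2 d) - 2)
        = ∑ d ∈ Finset.Icc 1 (m - 1),
            (c * ((2:ℝ) ^ (m - d) * (ePlus T1 T2 d + eMinus T1 T2 d)) - c * 2) := by
      apply Finset.sum_congr rfl; intro d _; ring
    rw [step, Finset.sum_sub_distrib, Finset.sum_const, ← Finset.mul_sum, Nat.card_Icc,
      nsmul_eq_mul]
    have hcard : (m - 1 + 1 - 1) = m - 1 := by omega
    rw [hcard, hcast1]
    ring
  -- Vc in terms of the target denominator
  have hVc2 : Vc = c * ((2:ℝ) ^ m - 2 * (m:ℝ) + 1) := by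
    have hpm : c * (2:ℝ) ^ m = (2:ℝ) ^ (-(m:ℤ)) := by
      rw [hc, ← zpow_natCast (2:ℝ) m, ← zpow_add₀ (by norm_num : (2:ℝ) ≠ 0)]
      congr 1
      ring
    rw [hVc, ← hpm, hcast1]
    ring
  have hV0 : 0 < Vc := by
    rw [hVc2]
    apply mul_pos hc0
    have h2m : (2 * m : ℝ) ≤ (2:ℝ) ^ m := by
      have := two_mul_le_two_pow m hm
      have hcast : ((2 * m : ℕ) : ℝ) ≤ ((2 ^ m : ℕ) : ℝ) := Nat.cast_le.2 this
      push_cast at hcast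
      linarith
    linarith
  have hW0 : 0 ≤ Wc := by
    rw [hWc]
    apply mul_nonneg
    · apply Finset.sum_nonneg; intro d _; positivity
    · positivity
  -- the function φ
  set φ : ℕ → ℝ := fun M => ((M + 1 - m : ℕ) : ℝ) with hφdef
  have hφ : Filter.Tendsto φ Filter.atTop Filter.atTop := by
    apply Filter.tendsto_atTop_atTop.2
    intro b
    obtain ⟨n, hn⟩ := exists_nat_ge b
    refine ⟨n + m, fun a ha => ?_⟩
    rw [hφdef]
    simp only []
    have : (n : ℝ) ≤ ((a + 1 - m : ℕ) : ℝ) := by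
      have : n ≤ a + 1 - m := by omega
      exact_mod_cast this
    linarith
  -- eventual equality
  have hEv : ∀ᶠ M in Filter.atTop, unifCov M (fun B => (occCount T1 B : ℝ))
      (fun B => (occCount T2 B : ℝ))
      / Real.sqrt (unifVar M (fun B => (occCount T1 B : ℝ))
          * unifVar M (fun B => (occCount T2 B : ℝ)))
      = (Ac + Bc / φ M) / (Vc + Wc / φ M) := by
    rw [Filter.eventually_atTop]
    refine ⟨2 * m, fun M hM => ?_⟩
    have hφ1 : (1:ℝ) ≤ φ M := by
      rw [hφdef]
      simp only []
      have : 1 ≤ M + 1 - m := by omega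
      exact_mod_cast this
    have hφpos : 0 < φ M := by linarith
    have hvar1 : unifVar M (fun B => (occCount T1 B : ℝ)) = Vc * φ M + Wc := by
      rw [var_formula hm T1 h1 hM, hVc, hWc, hφdef]
      ring
    have hvar2 : unifVar M (fun B => (occCount T2 B : ℝ)) = Vc * φ M + Wc := by
      rw [var_formula hm T2 h2 hM, hVc, hWc, hφdef]
      ring
    have hcov : unifCov M (fun B => (occCount T1 B : ℝ)) (fun B => (occCount T2 B : ℝ))
        = Ac * φ M + Bc := by
      rw [cov_closed hm T1 T2 hT hM, hAc, hBc, ht, hc, hφdef]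
      ring
    have hden0 : 0 < Vc * φ M + Wc := by
      have : Vc * 1 ≤ Vc * φ M := by
        apply mul_le_mul_of_nonneg_left hφ1 (le_of_lt hV0)
      nlinarith
    rw [hvar1, hvar2, hcov, Real.sqrt_mul_self (le_of_lt hden0)]
    have hφne : φ M ≠ 0 := ne_of_gt hφpos
    have hd2 : Vc + Wc / φ M ≠ 0 := by
      have : 0 < Vc + Wc / φ M := by positivity
      exact ne_of_gt this
    field_simp
  -- the limit of the rational function
  have hlim : Filter.Tendsto (fun M => (Ac + Bc / φ M) / (Vc + Wc / φ M))
      Filter.atTop (nhds ((Ac + 0) / (Vc + 0))) := by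
    apply Filter.Tendsto.div
    · exact Filter.Tendsto.add tendsto_const_nhds
        (Filter.Tendsto.div_atTop tendsto_const_nhds hφ)
    · exact Filter.Tendsto.add tendsto_const_nhds
        (Filter.Tendsto.div_atTop tendsto_const_nhds hφ)
    · rw [add_zero]; exact ne_of_gt hV0
  have hfinal : (Ac + 0) / (Vc + 0)
      = (-2 * (m : ℝ) + 1
          + ∑ d ∈ Finset.Icc 1 (m - 1), 2 ^ (m - d) * (ePlus T1 T2 d + eMinus T1 T2 d))
        / (2 ^ m - 2 * (m : ℝ) + 1) := by
    rw [add_zero, add_zero, hAc2, hVc2]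
    rw [mul_div_mul_left _ _ (ne_of_gt hc0)]
  rw [← hfinal]
  exact Filter.Tendsto.congr' (Filter.EventuallyEq.symm hEv) hlim
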